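/- Let p be a real polynomial of degree d, let k ≥ 1, and suppose |p(j)| ≤ 1 for all integers j ∈ {0,1,...,k}. If d < sqrt(0.001 k / 2.002), then |p(x)| < 1.001 for all real x ∈ [0,k]. -/

import Mathlib

open Polynomial Finset

set_option maxHeartbeats 1000000

namespace MarkovAux

lemma nodal_sign (S : Finset ℕ) (r : ℕ → ℝ) (x : ℝ) (hr : ∀ j ∈ S, x ≤ r j) :
    0 ≤ (-1)^S.card * (∏ j ∈ S, (X - C (r j))).eval x ∧
    (-1)^S.card * (derivative (∏ j ∈ S, (X - C (r j)))).eval x ≤ 0 ∧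
    0 ≤ (-1)^S.card * (derivative (derivative (∏ j ∈ S, (X - C (r j))))).eval x := by
  classical
  induction S using Finset.induction with
  | empty => simp
  | @insert a S ha ih =>
      have hra : x ≤ r a := hr a (mem_insert_self a S)
      obtain ⟨h0, h1, h2⟩ := ih (fun j hj => hr j (mem_insert_of_mem hj))
      rw [Finset.prod_insert ha, Finset.card_insert_of_notMem ha]
      set q := ∏ j ∈ S, (X - C (r j)) with hq
      have e1 : derivative ((X - C (r a)) * q) = q + (X - C (r a)) * derivative q := by
        rw [derivative_mul]; simp
      have e2 : derivative (q + (X - C (r a)) * derivative q)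
          = 2 * derivative q + (X - C (r a)) * derivative (derivative q) := by
        rw [derivative_add, derivative_mul]; simp; ring
      rw [e1, e2]
      simp only [eval_mul, eval_add, eval_sub, eval_X, eval_C, eval_ofNat, pow_succ]
      set s : ℝ := (-1)^S.card
      set e0 := q.eval x
      set d1 := (derivative q).eval x
      set d2 := (derivative (derivative q)).eval x
      have ht : x - r a ≤ 0 := by linarith
      refine ⟨?_, ?_, ?_⟩
      · nlinarith
      · nlinarith
      · nlinarith


def chebA (n : ℕ) : Prop :=
  (Polynomial.Chebyshev.T ℝ (n:ℤ)).eval (-1:ℝ) = (-1:ℝ)^n ∧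
  (derivative (Polynomial.Chebyshev.T ℝ (n:ℤ))).eval (-1:ℝ) = -(-1:ℝ)^n * n^2 ∧
  (derivative (derivative (Polynomial.Chebyshev.T ℝ (n:ℤ)))).eval (-1:ℝ)
    = (-1:ℝ)^n * (n^2*(n^2-1)/3)

lemma chebA_all (n : ℕ) : chebA n := by
  have key : ∀ m : ℕ, chebA m ∧ chebA (m+1) := by
    intro m
    induction m with
    | zero =>
        constructor
        · refine ⟨by simp [Polynomial.Chebyshev.T_zero], ?_, ?_⟩ <;>
            simp [Polynomial.Chebyshev.T_zero]
        · refine ⟨?_, ?_, ?_⟩ <;>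
            simp [Polynomial.Chebyshev.T_one]
    | succ m ih =>
        obtain ⟨⟨a0, a1, a2⟩, ⟨b0, b1, b2⟩⟩ := ih
        set A := Polynomial.Chebyshev.T ℝ (m:ℤ) with hA
        set B := Polynomial.Chebyshev.T ℝ ((m+1:ℕ):ℤ) with hB
        have hT : Polynomial.Chebyshev.T ℝ ((m+1+1:ℕ):ℤ) = 2 * X * B - A := by
          rw [hB, hA]; push_cast
          exact Polynomial.Chebyshev.T_add_two ℝ m
        have hd1 : derivative (Polynomial.Chebyshev.T ℝ ((m+1+1:ℕ):ℤ))
            = 2*B + 2*X*derivative B - derivative A := by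
          rw [hT]
          simp only [derivative_sub, derivative_mul, derivative_X, derivative_ofNat]
          ring
        have hd2 : derivative (derivative (Polynomial.Chebyshev.T ℝ ((m+1+1:ℕ):ℤ)))
            = 4*derivative B + 2*X*derivative (derivative B) - derivative (derivative A) := by
          rw [hd1]
          simp only [derivative_sub, derivative_add, derivative_mul, derivative_X,
            derivative_ofNat]
          ring
        have hs : ((-1:ℝ))^(m+m) = 1 := Even.neg_one_pow ⟨m, rfl⟩
        rw [pow_add] at hs
        refine ⟨⟨b0, b1, b2⟩, ?_, ?_, ?_⟩
        · rw [hT]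
          simp only [eval_sub, eval_mul, eval_X, eval_ofNat, a0, b0]
          push_cast; ring_nf
        · rw [hd1]
          simp only [eval_sub, eval_add, eval_mul, eval_X, eval_ofNat, a1, b0, b1]
          push_cast; ring_nf
        · rw [hd2]
          simp only [eval_sub, eval_add, eval_mul, eval_X, eval_ofNat, a2, b1, b2]
          push_cast; ring_nf
  exact (key n).1


lemma natDegree_T_le (n : ℕ) : (Polynomial.Chebyshev.T ℝ (n:ℤ)).natDegree ≤ n := by
  have key : ∀ m : ℕ, (Polynomial.Chebyshev.T ℝ (m:ℤ)).natDegree ≤ m ∧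
      (Polynomial.Chebyshev.T ℝ ((m+1:ℕ):ℤ)).natDegree ≤ m+1 := by
    intro m
    induction m with
    | zero =>
        constructor
        · simp [Polynomial.Chebyshev.T_zero]
        · push_cast; simp [Polynomial.Chebyshev.T_one]
    | succ m ih =>
        obtain ⟨h1, h2⟩ := ih
        refine ⟨h2, ?_⟩
        have hT : Polynomial.Chebyshev.T ℝ ((m+1+1:ℕ):ℤ)
            = 2 * X * Polynomial.Chebyshev.T ℝ ((m+1:ℕ):ℤ)
              - Polynomial.Chebyshev.T ℝ (m:ℤ) := by
          push_cast; exact Polynomial.Chebyshev.T_add_two ℝ m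
        rw [hT]
        refine le_trans (natDegree_sub_le _ _) ?_
        have hmul : ((2 * X : ℝ[X]) * Polynomial.Chebyshev.T ℝ ((m+1:ℕ):ℤ)).natDegree
            ≤ m + 2 := by
          refine le_trans (natDegree_mul_le) ?_
          have : (2 * X : ℝ[X]).natDegree ≤ 1 := le_trans natDegree_mul_le (by simp)
          omega
        have := h1
        simp only [max_le_iff]
        omega
  exact (key n).1

/-- Chebyshev extrema nodes on `[-1,1]`, for the interval parametrized decreasingly. -/
noncomputable def node (n i : ℕ) : ℝ := Real.cos (i * Real.pi / n)

lemma node_mem (n : ℕ) (i : ℕ) : -1 ≤ node n i ∧ node n i ≤ 1 :=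
  ⟨Real.neg_one_le_cos _, Real.cos_le_one _⟩

lemma node_strictAnti (n : ℕ) (hn : 1 ≤ n) : ∀ i j, i < j → j ≤ n →
    node n j < node n i := by
  intro i j hij hjn
  have hπ := Real.pi_pos
  have hn' : (0:ℝ) < n := by positivity
  apply Real.cos_lt_cos_of_nonneg_of_le_pi
  · positivity
  · rw [div_le_iff₀ hn']
    calc (j:ℝ) * Real.pi ≤ n * Real.pi := by
          have : (j:ℝ) ≤ n := by exact_mod_cast hjn
          nlinarith
    _ = Real.pi * n := by ring
  · have h1 : (i:ℝ) < j := by exact_mod_cast hij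
    have : (i:ℝ) * Real.pi < j * Real.pi := by nlinarith
    exact (div_lt_div_iff_of_pos_right hn').mpr this

lemma node_injOn (n : ℕ) (hn : 1 ≤ n) :
    Set.InjOn (node n) (Finset.range (n+1) : Finset ℕ) := by
  intro a ha b hb hab
  simp only [Finset.coe_range, Set.mem_Iio] at ha hb
  by_contra hne
  rcases lt_or_gt_of_ne hne with h | h
  · exact absurd hab (ne_of_gt (node_strictAnti n hn a b h (by omega)))
  · exact absurd hab.symm (ne_of_gt (node_strictAnti n hn b a h (by omega)))

lemma T_node (n : ℕ) (hn : 1 ≤ n) (i : ℕ) :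
    (Polynomial.Chebyshev.T ℝ (n:ℤ)).eval (node n i) = (-1:ℝ)^i := by
  have hn' : (n:ℝ) ≠ 0 := by positivity
  rw [node, Polynomial.Chebyshev.T_real_cos]
  have : (n:ℝ) * (i * Real.pi / n) = i * Real.pi := by field_simp
  rw [show ((n:ℤ):ℝ) = (n:ℝ) by push_cast; rfl, this]
  simpa using Real.cos_nat_mul_pi_sub 0 i


/-- Endpoint second-derivative Markov bound on `[-1,1]`. -/
lemma markov_endpoint (n : ℕ) (hn : 1 ≤ n) (r : ℝ[X]) (M : ℝ)
    (hdeg : r.natDegree ≤ n) (hb : ∀ x ∈ Set.Icc (-1:ℝ) 1, |r.eval x| ≤ M) :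
    |(derivative (derivative r)).eval (-1)| ≤ M * (n^2*(n^2-1)/3) := by
  classical
  set s : Finset ℕ := Finset.range (n+1) with hs
  set v : ℕ → ℝ := node n with hv
  have hvs : Set.InjOn v s := node_injOn n hn
  have hcard : #s = n + 1 := Finset.card_range _
  -- decompose basis polynomials
  set c : ℕ → ℝ := fun i => ∏ j ∈ s.erase i, (v i - v j)⁻¹ with hc
  set Q : ℕ → ℝ[X] := fun i => ∏ j ∈ s.erase i, (X - C (v j)) with hQ
  have hbasis : ∀ i, Lagrange.basis s v i = C (c i) * Q i := by
    intro i
    rw [Lagrange.basis, hc, hQ]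
    simp only [Lagrange.basisDivisor]
    rw [Finset.prod_mul_distrib, map_prod]
  set D : ℕ → ℝ := fun i => (derivative (derivative (Q i))).eval (-1) with hD
  -- generic formula for the second derivative of an interpolation-shaped sum
  have helper : ∀ f : ℕ → ℝ,
      (derivative (derivative (∑ i ∈ s, C (f i) * Lagrange.basis s v i))).eval (-1)
        = ∑ i ∈ s, f i * (c i * D i) := by
    intro f
    rw [derivative_sum]
    rw [derivative_sum]
    rw [eval_finset_sum]
    refine Finset.sum_congr rfl ?_
    intro i hi
    rw [hbasis i, ← mul_assoc, ← C_mul, derivative_C_mul, derivative_C_mul, eval_mul, eval_C, hD]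
    ring
  -- sign facts
  have hQsign : ∀ i ∈ s, 0 ≤ (-1:ℝ)^n * D i := by
    intro i hi
    have hcard' : (s.erase i).card = n := by
      rw [Finset.card_erase_of_mem hi, hcard]
      omega
    have := (nodal_sign (s.erase i) v (-1) (fun j _ => (node_mem n j).1)).2.2
    rwa [hcard'] at this
  have hcsign : ∀ i ∈ s, 0 < (-1:ℝ)^i * c i := by
    intro i hi
    have hin : i ≤ n := by
      rw [hs] at hi; simp only [Finset.mem_range] at hi; omega
    have hsplit : s.erase i = (Finset.range i) ∪ (Finset.Ioc i n) := by
      ext j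
      simp only [Finset.mem_erase, hs, Finset.mem_range, Finset.mem_union, Finset.mem_Ioc]
      omega
    have hdisj : Disjoint (Finset.range i) (Finset.Ioc i n) := by
      simp only [Finset.disjoint_left, Finset.mem_range, Finset.mem_Ioc]
      omega
    rw [hc]
    simp only
    rw [hsplit, Finset.prod_union hdisj]
    have h1 : (-1:ℝ)^i * ∏ j ∈ Finset.range i, (v i - v j)⁻¹
        = ∏ j ∈ Finset.range i, (-(v i - v j)⁻¹) := by
      rw [show ((-1:ℝ))^i = ∏ _j ∈ Finset.range i, (-1:ℝ) by
        rw [Finset.prod_const, Finset.card_range], ← Finset.prod_mul_distrib]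
      congr 1; ext j; ring
    have h2 : 0 < ∏ j ∈ Finset.range i, (-(v i - v j)⁻¹) := by
      apply Finset.prod_pos
      intro j hj
      simp only [Finset.mem_range] at hj
      have := node_strictAnti n hn j i hj hin
      have : v i - v j < 0 := by rw [hv]; simpa using sub_neg.mpr this
      simp only [neg_pos]
      exact inv_neg''.mpr this
    have h3 : 0 < ∏ j ∈ Finset.Ioc i n, (v i - v j)⁻¹ := by
      apply Finset.prod_pos
      intro j hj
      simp only [Finset.mem_Ioc] at hj
      have := node_strictAnti n hn i j hj.1 hj.2
      have : 0 < v i - v j := by rw [hv]; simpa using sub_pos.mpr this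
      exact inv_pos.mpr this
    calc (0:ℝ) < (∏ j ∈ Finset.range i, (-(v i - v j)⁻¹)) * ∏ j ∈ Finset.Ioc i n, (v i - v j)⁻¹ :=
          mul_pos h2 h3
    _ = (-1:ℝ)^i * ((∏ j ∈ Finset.range i, (v i - v j)⁻¹) * ∏ j ∈ Finset.Ioc i n, (v i - v j)⁻¹) := by
          rw [← h1]; ring
  -- M nonneg
  have hM0 : 0 ≤ M := le_trans (abs_nonneg _) (hb (-1) (by norm_num))
  -- interpolation representation of r
  have hrdeg : r.degree < (#s : WithBot ℕ) := by
    rw [hcard]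
    refine lt_of_le_of_lt degree_le_natDegree ?_
    exact_mod_cast Nat.lt_succ_of_le hdeg
  have hrrep : r = ∑ i ∈ s, C (r.eval (v i)) * Lagrange.basis s v i := by
    conv_lhs => rw [Lagrange.eq_interpolate hvs hrdeg]
    rw [Lagrange.interpolate_apply]
  -- interpolation representation of T
  set T : ℝ[X] := Polynomial.Chebyshev.T ℝ (n:ℤ) with hT
  have hTdeg : T.degree < (#s : WithBot ℕ) := by
    rw [hcard]
    refine lt_of_le_of_lt degree_le_natDegree ?_
    exact_mod_cast Nat.lt_succ_of_le (natDegree_T_le n)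
  have hTrep : T = ∑ i ∈ s, C ((-1:ℝ)^i) * Lagrange.basis s v i := by
    conv_lhs => rw [Lagrange.eq_interpolate_of_eval_eq hvs hTdeg
      (r := fun i => (-1:ℝ)^i) (fun i _ => T_node n hn i)]
    rw [Lagrange.interpolate_apply]
  -- compute both second derivatives
  have Er : (derivative (derivative r)).eval (-1) = ∑ i ∈ s, r.eval (v i) * (c i * D i) := by
    conv_lhs => rw [hrrep]
    exact helper _
  have ET : (∑ i ∈ s, (-1:ℝ)^i * (c i * D i)) = (-1:ℝ)^n * (n^2*(n^2-1)/3) := by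
    rw [← helper (fun i => (-1:ℝ)^i), ← hTrep, (chebA_all n).2.2]
  have hone : ((-1:ℝ))^n * (-1:ℝ)^n = 1 := by
    rw [← pow_add]; exact Even.neg_one_pow ⟨n, by omega⟩
  -- final estimate
  rw [Er]
  calc |∑ i ∈ s, r.eval (v i) * (c i * D i)|
      ≤ ∑ i ∈ s, |r.eval (v i) * (c i * D i)| := Finset.abs_sum_le_sum_abs _ _
    _ ≤ ∑ i ∈ s, M * (((-1:ℝ)^i * c i) * ((-1:ℝ)^n * D i)) := by
        refine Finset.sum_le_sum ?_
        intro i hi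
        have hci := hcsign i hi
        have hDi := hQsign i hi
        have habs : |r.eval (v i)| ≤ M :=
          hb (v i) (Set.mem_Icc.mpr ⟨(node_mem n i).1, (node_mem n i).2⟩)
        have h1 : |c i| = (-1:ℝ)^i * c i := by
          rw [← abs_of_pos hci, abs_mul, abs_pow, abs_neg, abs_one, one_pow, one_mul]
        have h2 : |D i| = (-1:ℝ)^n * D i := by
          rw [← abs_of_nonneg hDi, abs_mul, abs_pow, abs_neg, abs_one, one_pow, one_mul]
        have hkey : |c i * D i| = ((-1:ℝ)^i * c i) * ((-1:ℝ)^n * D i) := by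
          rw [abs_mul, h1, h2]
        rw [abs_mul, hkey]
        exact mul_le_mul_of_nonneg_right habs (mul_nonneg hci.le hDi)
    _ = M * ((-1:ℝ)^n * ∑ i ∈ s, (-1:ℝ)^i * (c i * D i)) := by
        rw [Finset.mul_sum, Finset.mul_sum]
        refine Finset.sum_congr rfl ?_
        intro i hi; ring
    _ = M * (n^2*(n^2-1)/3) := by
        rw [ET]
        linear_combination (M * ((n:ℝ)^2*((n:ℝ)^2-1)/3)) * hone

lemma markov_transfer (n : ℕ) (hn : 1 ≤ n) (q : ℝ[X]) (M γ δ : ℝ) (hγ : γ ≠ 0)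
    (hdeg : q.natDegree ≤ n)
    (hb : ∀ y ∈ Set.Icc (-1:ℝ) 1, |q.eval (γ*y+δ)| ≤ M) :
    |(derivative (derivative q)).eval (γ*(-1)+δ)| ≤ M * n^4 / γ^2 := by
  set L : ℝ[X] := C γ * X + C δ with hL
  set r : ℝ[X] := q.comp L with hr
  have hLdeg : L.natDegree = 1 := natDegree_linear hγ
  have hLeval : ∀ y : ℝ, L.eval y = γ*y+δ := by intro y; simp [hL]
  have hrdeg : r.natDegree ≤ n := by
    rw [hr, natDegree_comp, hLdeg, mul_one]; exact hdeg
  have hrb : ∀ y ∈ Set.Icc (-1:ℝ) 1, |r.eval y| ≤ M := by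
    intro y hy
    rw [hr, eval_comp, hLeval]
    exact hb y hy
  have hLd : derivative L = C γ := by
    rw [hL]; simp
  have hdd : derivative (derivative r) = C (γ^2) * (derivative (derivative q)).comp L := by
    rw [hr, derivative_comp, hLd, derivative_mul, derivative_C, zero_mul, zero_add,
      derivative_comp, hLd]
    rw [map_pow]; ring
  have hM0 : 0 ≤ M := le_trans (abs_nonneg _) (hb (-1) (by norm_num))
  have key := markov_endpoint n hn r M hrdeg hrb
  rw [hdd] at key
  simp only [eval_mul, eval_C, eval_comp, hLeval] at key
  rw [abs_mul, abs_pow, sq_abs] at key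
  have hγ2 : (0:ℝ) < γ^2 := by positivity
  have hbound : M * ((n:ℝ)^2*((n:ℝ)^2-1)/3) ≤ M * (n:ℝ)^4 := by
    have h1 : ((n:ℝ)^2*((n:ℝ)^2-1)/3) ≤ (n:ℝ)^4 := by nlinarith [sq_nonneg ((n:ℝ))]
    nlinarith
  rw [le_div_iff₀ hγ2]
  calc |(derivative (derivative q)).eval (γ*(-1)+δ)| * γ^2
      = γ^2 * |(derivative (derivative q)).eval (γ*(-1)+δ)| := by ring
    _ ≤ M * ((n:ℝ)^2*((n:ℝ)^2-1)/3) := key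
    _ ≤ M * (n:ℝ)^4 := hbound


lemma final_contra (M dr kr : ℝ) (hM1 : 1.001 ≤ M) (hkpos : 0 < kr)
    (hk2002 : 2002*dr^2 < kr)
    (hchain : 8*(M-1) * (kr^2/16) ≤ M * dr^4) : False := by
  have hd4 : dr^4 * 2002^2 ≤ kr^2 := by nlinarith [sq_nonneg dr]
  have hM0 : (0:ℝ) ≤ M := by linarith
  have hMk := mul_le_mul_of_nonneg_left hd4 hM0
  nlinarith [sq_nonneg kr, mul_pos hkpos hkpos]



end MarkovAux

open MarkovAux

/-- Contrapositive form of the Markov corollary: a polynomial of degree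
`d < sqrt(0.001·k / 2.002)` that is bounded by 1 at the integers `{0, 1, …, k}` (`k ≥ 1`)
satisfies `|p(x)| < 1.001` on all of `[0, k]`. -/
theorem markov_corollary_contrapositive
    (p : Polynomial ℝ) (d k : ℕ)
    (hd : p.natDegree = d) (hk : 1 ≤ k)
    (hbound : ∀ j : ℕ, j ≤ k → |p.eval (j : ℝ)| ≤ 1)
    (hdeg : (d : ℝ) < Real.sqrt (0.001 * k / 2.002)) :
    ∀ x ∈ Set.Icc (0 : ℝ) k, |p.eval x| < 1.001 := by
  intro x hx
  by_cases hd0 : d = 0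
  · -- constant polynomial
    have hp : p = C (p.coeff 0) := Polynomial.eq_C_of_natDegree_eq_zero (hd.trans hd0)
    have h0 := hbound 0 (by omega)
    rw [hp]
    rw [hp] at h0
    simp only [eval_C] at h0 ⊢
    linarith
  · have hd1 : 1 ≤ d := by omega
    -- degree bound numerics
    have hd2 : (d:ℝ)^2 < 0.001 * k / 2.002 := by
      have h0 : (0:ℝ) ≤ (d:ℝ) := by positivity
      have := (Real.lt_sqrt h0).mp hdeg
      linarith
    have hkpos : (0:ℝ) < k := by exact_mod_cast hk
    have hk2002 : 2002 * (d:ℝ)^2 < k := by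
      have h2 : (1e-3:ℝ) * k / 2.002 = k / 2002 := by ring_nf
      rw [h2] at hd2
      linarith
    by_contra hcon
    push_neg at hcon
    have hx1 : 1.001 ≤ |p.eval x| := hcon
    -- maximum of |p| on [0,k]
    obtain ⟨xs, hxs_mem, hmax⟩ := (isCompact_Icc (a := (0:ℝ)) (b := (k:ℝ))).exists_isMaxOn
      (Set.nonempty_Icc.mpr (by positivity))
      ((continuous_abs.comp (Polynomial.continuous p)).continuousOn)
    obtain ⟨M, hM⟩ : ∃ M : ℝ, M = |p.eval xs| := ⟨_, rfl⟩
    have hmax' : ∀ y ∈ Set.Icc (0:ℝ) k, |p.eval y| ≤ M := fun y hy => by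
      rw [hM]; exact hmax hy
    have hM1 : 1.001 ≤ M := le_trans hx1 (hmax' x hx)
    -- xs is not an integer point
    have hint : ¬ ∃ m : ℤ, (m:ℝ) = xs := by
      rintro ⟨m, hm⟩
      have hm0 : 0 ≤ m := by
        have : (0:ℝ) ≤ (m:ℝ) := by rw [hm]; exact hxs_mem.1
        exact_mod_cast this
      have hmk : m ≤ (k:ℤ) := by
        have : (m:ℝ) ≤ (k:ℝ) := by rw [hm]; exact hxs_mem.2
        exact_mod_cast this
      have hj : (m.toNat : ℝ) = xs := by
        rw [← hm]; exact_mod_cast Int.toNat_of_nonneg hm0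
      have := hbound m.toNat (Int.toNat_le.mpr hmk)
      rw [hj] at this
      linarith
    have hxs0 : 0 < xs := by
      rcases lt_or_eq_of_le hxs_mem.1 with h | h
      · exact h
      · exact absurd ⟨0, by exact_mod_cast h⟩ hint
    have hxsk : xs < k := by
      rcases lt_or_eq_of_le hxs_mem.2 with h | h
      · exact h
      · exact absurd ⟨(k:ℤ), by exact_mod_cast h.symm⟩ hint
    -- derivative vanishes at xs
    have hpxs : p.eval xs ≠ 0 := by
      intro h
      rw [hM, h] at hM1
      simp at hM1
      linarith
    have hderiv0 : (derivative p).eval xs = 0 := by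
      have hmax2 : IsMaxOn (fun y => ((p*p).eval y)) (Set.Icc (0:ℝ) k) xs := by
        intro y hy
        simp only [Set.mem_setOf_eq, eval_mul]
        have h1 := hmax' y hy
        have : |p.eval y| * |p.eval y| ≤ M * M := by
          apply mul_le_mul h1 h1 (abs_nonneg _) (le_trans (abs_nonneg _) h1)
        calc p.eval y * p.eval y = |p.eval y| * |p.eval y| := (abs_mul_abs_self _).symm
          _ ≤ M * M := this
          _ = p.eval xs * p.eval xs := by rw [hM, abs_mul_abs_self]
      have hloc : IsLocalMax (fun y => ((p*p).eval y)) xs :=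
        hmax2.isLocalMax (Icc_mem_nhds hxs0 hxsk)
      have hz := hloc.deriv_eq_zero
      rw [Polynomial.deriv] at hz
      simp only [derivative_mul, eval_add, eval_mul] at hz
      have : p.eval xs * ((derivative p).eval xs) = 0 := by linarith
      rcases mul_eq_zero.mp this with h | h
      · exact absurd h hpxs
      · exact h
    -- nearest integer
    obtain ⟨m, hm⟩ : ∃ m : ℤ, m = round xs := ⟨_, rfl⟩
    have hmd : |xs - (m:ℝ)| ≤ 1/2 := by rw [hm]; exact abs_sub_round xs
    have hm0 : 0 ≤ m := by
      by_contra h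
      push_neg at h
      have h' : m ≤ -1 := by omega
      have : (m:ℝ) ≤ -1 := by exact_mod_cast h'
      have := abs_le.mp hmd
      linarith
    have hmk : m ≤ (k:ℤ) := by
      by_contra h
      push_neg at h
      have : (k:ℝ) + 1 ≤ (m:ℝ) := by exact_mod_cast h
      have := abs_le.mp hmd
      linarith
    obtain ⟨u, hu⟩ : ∃ u : ℝ, u = ((m.toNat : ℕ) : ℝ) := ⟨_, rfl⟩
    have hum : u = (m:ℝ) := by rw [hu]; exact_mod_cast Int.toNat_of_nonneg hm0
    have hub : |p.eval u| ≤ 1 := by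
      rw [hu]; exact hbound m.toNat (Int.toNat_le.mpr hmk)
    have hune : u ≠ xs := by
      intro h
      exact hint ⟨m, by rw [← hum, h]⟩
    have husq : (0:ℝ) < (u - xs)^2 := by
      have : u - xs ≠ 0 := sub_ne_zero.mpr hune
      positivity
    have husq4 : (u - xs)^2 ≤ 1/4 := by
      have h1 : |xs - (m:ℝ)| ≤ 1/2 := hmd
      rw [← hum] at h1
      have := abs_le.mp h1
      nlinarith [this.1, this.2]
    -- the auxiliary polynomial G and double Rolle
    obtain ⟨A, hA⟩ : ∃ A : ℝ, A = (p.eval u - p.eval xs)/(u - xs)^2 := ⟨_, rfl⟩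
    obtain ⟨G, hG⟩ : ∃ G : ℝ[X], G = p - C (p.eval xs) - C A * (X - C xs)^2 := ⟨_, rfl⟩
    have hGxs : G.eval xs = 0 := by simp [hG]
    have hGu : G.eval u = 0 := by
      simp only [hG, eval_sub, eval_mul, eval_pow, eval_C, eval_X, hA]
      field_simp
      ring
    have hGd : derivative G = derivative p - C A * (2*(X - C xs)) := by
      rw [hG, derivative_sub, derivative_sub, derivative_C, derivative_C_mul,
        derivative_pow, derivative_sub, derivative_X, derivative_C]
      simp only [Nat.cast_ofNat, map_ofNat]
      ring
    have hGdxs : (derivative G).eval xs = 0 := by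
      rw [hGd]
      simp [hderiv0]
    have hGdd : derivative (derivative G) = derivative (derivative p) - C A * 2 := by
      rw [hGd, derivative_sub, derivative_C_mul]
      simp only [derivative_mul, derivative_sub, derivative_X, derivative_C, derivative_ofNat]
      ring
    -- two Rolle applications
    have key : ∃ η, η ∈ Set.Ioo (0:ℝ) k ∧ (derivative (derivative p)).eval η = 2*A := by
      have cont : ∀ q : ℝ[X], ContinuousOn (fun y => q.eval y) (Set.Icc (min xs u) (max xs u)) :=
        fun q => (Polynomial.continuous q).continuousOn
      rcases lt_or_gt_of_ne hune with h | h
      · -- u < xs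
        obtain ⟨ζ, hζ, hζ0⟩ := exists_deriv_eq_zero h
          ((Polynomial.continuous G).continuousOn) (by rw [hGu, hGxs])
        rw [Polynomial.deriv] at hζ0
        obtain ⟨η, hη, hη0⟩ := exists_deriv_eq_zero hζ.2
          ((Polynomial.continuous (derivative G)).continuousOn) (by rw [hζ0, hGdxs])
        rw [Polynomial.deriv] at hη0
        refine ⟨η, ?_, ?_⟩
        · constructor
          · have : (0:ℝ) ≤ u := by rw [hu]; positivity
            linarith [hη.1, hζ.1]
          · linarith [hη.2, hxsk]
        · rw [hGdd] at hη0
          simp only [eval_sub, eval_mul, eval_C, eval_ofNat] at hη0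
          linarith
      · -- xs < u
        obtain ⟨ζ, hζ, hζ0⟩ := exists_deriv_eq_zero h
          ((Polynomial.continuous G).continuousOn) (by rw [hGxs, hGu])
        rw [Polynomial.deriv] at hζ0
        obtain ⟨η, hη, hη0⟩ := exists_deriv_eq_zero hζ.1
          ((Polynomial.continuous (derivative G)).continuousOn) (by rw [hGdxs, hζ0])
        rw [Polynomial.deriv] at hη0
        refine ⟨η, ?_, ?_⟩
        · constructor
          · linarith [hη.1, hxs0]
          · have huk : u ≤ (k:ℝ) := by
              rw [hum]; exact_mod_cast hmk
            linarith [hη.2, hζ.2]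
        · rw [hGdd] at hη0
          simp only [eval_sub, eval_mul, eval_C, eval_ofNat] at hη0
          linarith
    obtain ⟨η, hη, hηval⟩ := key
    -- lower bound on |p''(η)|
    have hΔ : M - 1 ≤ |p.eval u - p.eval xs| := by
      have h1 : |p.eval xs| - |p.eval u| ≤ |p.eval xs - p.eval u| :=
        abs_sub_abs_le_abs_sub _ _
      rw [abs_sub_comm] at h1
      rw [hM]
      linarith
    have hlow : 8*(M-1) ≤ |(derivative (derivative p)).eval η| := by
      rw [hηval]
      have h2A : (2:ℝ)*A = 2*(p.eval u - p.eval xs)/(u-xs)^2 := by rw [hA]; ring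
      rw [h2A, abs_div, abs_mul, abs_two, abs_of_pos husq]
      rw [le_div_iff₀ husq]
      nlinarith [hΔ, husq4, hM1]
    -- upper bound on |p''(η)| via endpoint Markov
    have hM0 : (0:ℝ) ≤ M := by linarith
    have hupp : |(derivative (derivative p)).eval η| ≤ M*(d:ℝ)^4/((k:ℝ)^2/16) := by
      have hdegp : p.natDegree ≤ d := le_of_eq hd
      rcases le_or_gt η ((k:ℝ)/2) with hcase | hcase
      · -- interval [η, k], left endpoint
        obtain ⟨γ, hγdef⟩ : ∃ g : ℝ, g = ((k:ℝ)-η)/2 := ⟨_, rfl⟩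
        obtain ⟨δ, hδdef⟩ : ∃ g : ℝ, g = ((k:ℝ)+η)/2 := ⟨_, rfl⟩
        have hγpos : 0 < γ := by rw [hγdef]; linarith [hη.2]
        have hb' : ∀ y ∈ Set.Icc (-1:ℝ) 1, |p.eval (γ*y+δ)| ≤ M := by
          intro y hy
          apply hmax'
          constructor
          · nlinarith [hy.1, hy.2, hη.1, hγpos]
          · nlinarith [hy.1, hy.2, hη.2, hγpos]
        have := markov_transfer d hd1 p M γ δ (ne_of_gt hγpos) hdegp hb'
        have heq : γ*(-1)+δ = η := by rw [hγdef, hδdef]; ring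
        rw [heq] at this
        refine le_trans this ?_
        apply div_le_div_of_nonneg_left (by positivity) (by positivity) ?_
        rw [hγdef]
        nlinarith [hcase, hkpos]
      · -- interval [0, η], right endpoint
        obtain ⟨γ, hγdef⟩ : ∃ g : ℝ, g = -(η/2) := ⟨_, rfl⟩
        obtain ⟨δ, hδdef⟩ : ∃ g : ℝ, g = η/2 := ⟨_, rfl⟩
        have hηpos : 0 < η := hη.1
        have hγne : γ ≠ 0 := by rw [hγdef]; intro h; nlinarith
        have hb' : ∀ y ∈ Set.Icc (-1:ℝ) 1, |p.eval (γ*y+δ)| ≤ M := by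
          intro y hy
          apply hmax'
          constructor
          · nlinarith [hy.1, hy.2, hηpos]
          · nlinarith [hy.1, hy.2, hη.2, hηpos]
        have := markov_transfer d hd1 p M γ δ hγne hdegp hb'
        have heq : γ*(-1)+δ = η := by rw [hγdef, hδdef]; ring
        rw [heq] at this
        refine le_trans this ?_
        apply div_le_div_of_nonneg_left (by positivity) (by positivity) ?_
        rw [hγdef]
        nlinarith [hcase, hkpos]
    -- final numeric contradiction
    have hchain : 8*(M-1) ≤ M*(d:ℝ)^4/((k:ℝ)^2/16) := le_trans hlow hupp
    rw [le_div_iff₀ (by positivity)] at hchain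
    exact final_contra M d k hM1 hkpos hk2002 hchain
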